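/- The dispersion polynomial of the hydrodynamic system: for the 5×5 matrix L(λ) = λ₀·A⁰(u) + λᵢ·Aⁱ(u) built from the Euler matrices A⁰, A¹, A², A³ of the rotating fluid equations, det(L) factors as (λ₀ + v·λ⃗)³ · [ (λ₀ + v·λ⃗)² − (κp/ρ)|λ⃗|² ] (up to sign convention). -/

import Mathlib

open Matrix

set_option maxHeartbeats 1000000 in
lemma det5 (a b c d e f g h : ℝ) :
    (!![a,0,0,0,b; 0,a,0,0,c; 0,0,a,0,d; e,f,g,a,0; 0,0,0,h,a] :
      Matrix (Fin 5) (Fin 5) ℝ).det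
    = a^5 + h * a^2 * (b*e + c*f + d*g) := by
  simp [Matrix.det_succ_row_zero, Fin.sum_univ_succ, Fin.succAbove]
  ring

set_option maxHeartbeats 1000000 in
/-- Dispersion polynomial of the rotating Euler system: the determinant of
L(λ) = λ₀A⁰ + λᵢAⁱ factors as (λ₀ + v·λ⃗)³·[(λ₀ + v·λ⃗)² − (κp/ρ)|λ⃗|²]. -/
theorem euler_dispersion_relation (κ p ρ v₁ v₂ v₃ l₀ l₁ l₂ l₃ : ℝ) (hρ : ρ ≠ 0) :
    let A0 : Matrix (Fin 5) (Fin 5) ℝ :=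
      !![1,0,0,0,0; 0,1,0,0,0; 0,0,1,0,0; 0,0,0,1,0; 0,0,0,-κ*p/ρ,1]
    let A1 : Matrix (Fin 5) (Fin 5) ℝ :=
      !![v₁,0,0,0,1/ρ; 0,v₁,0,0,0; 0,0,v₁,0,0; ρ,0,0,v₁,0; 0,0,0,-κ*p*v₁/ρ,v₁]
    let A2 : Matrix (Fin 5) (Fin 5) ℝ :=
      !![v₂,0,0,0,0; 0,v₂,0,0,1/ρ; 0,0,v₂,0,0; 0,ρ,0,v₂,0; 0,0,0,-κ*p*v₂/ρ,v₂]
    let A3 : Matrix (Fin 5) (Fin 5) ℝ :=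
      !![v₃,0,0,0,0; 0,v₃,0,0,0; 0,0,v₃,0,1/ρ; 0,0,ρ,v₃,0; 0,0,0,-κ*p*v₃/ρ,v₃]
    let L : Matrix (Fin 5) (Fin 5) ℝ := l₀ • A0 + l₁ • A1 + l₂ • A2 + l₃ • A3
    L.det = (l₀ + (v₁*l₁ + v₂*l₂ + v₃*l₃))^3 *
      ((l₀ + (v₁*l₁ + v₂*l₂ + v₃*l₃))^2 - (κ*p/ρ) * (l₁^2 + l₂^2 + l₃^2)) := by
  intro A0 A1 A2 A3 L
  set a := l₀ + (v₁*l₁ + v₂*l₂ + v₃*l₃) with ha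
  have hL : L = !![a,0,0,0,l₁/ρ; 0,a,0,0,l₂/ρ; 0,0,a,0,l₃/ρ;
      ρ*l₁,ρ*l₂,ρ*l₃,a,0; 0,0,0,-(κ*p*a)/ρ,a] := by
    simp only [L, A0, A1, A2, A3]
    ext i j
    fin_cases i <;> fin_cases j <;>
      simp [Matrix.add_apply, Matrix.smul_apply, Matrix.vecHead, Matrix.vecTail, ha] <;>
      ring
  rw [hL, det5]
  field_simp
  ring
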